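/- arXiv:2106.12500 — 2 statements merged into one kernel-verified Lean document; each statement's English description precedes it below -/
import Mathlib

section
/- Iwahori–Matsumoto presentation: suppose G, I, N, W̃ = W_aff ⋊ Ω satisfy axioms (T0), (T3), (T4), (TΩ), (TS), (TF). Then the Iwahori–Hecke ring H(G,I) satisfies the braid relations i_w ⋆ i_{w'} = i_{ww'} for all w, w' ∈ W̃ with ℓ(w) + ℓ(w') = ℓ(ww'), and the quadratic relations i_s ⋆ i_s = q_s·i_1 + (q_s − 1)·i_s for every s ∈ S. -/
open scoped Pointwise

/-! ## Setting

`G` is a group with subgroups `I` and `N` such that `T := I ⊓ N` is normal in `N`, and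
`W̃ := N/T` is presented via a surjective homomorphism `π : N →* W̃` whose kernel consists of
the elements of `N` lying in `I`.  `W̃ = W_aff ⋊ Ω` is an internal semidirect product, where
`W_aff` carries a Coxeter system `cs` (with simple reflections indexed by `B`), the length
function `ℓ` of `cs` is extended to `W̃` by `ℓ (w * u) = ℓ w` for `w ∈ W_aff`, `u ∈ Ω`, and
the axioms (T0), (T3), (T4), (TΩ), (TS), (TF) hold. -/

/-- The double coset `I·n·I ⊆ G` attached to an element `w ∈ W̃ = N/T`, described as the union
of `I·n·I` over all representatives `n ∈ N` of `w` (these double cosets all coincide, since any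
two representatives differ by an element of `T = I ⊓ N ⊆ I`). -/
def IwI {G : Type} [Group G] {W : Type} [Group W] (I : Subgroup G) {N : Subgroup G}
    (π : N →* W) (w : W) : Set G :=
  {g : G | ∃ n : N, π n = w ∧ ∃ i ∈ I, ∃ j ∈ I, g = i * (n : G) * j}

/-- The basis element `i_w = 1_{IwI} : G → ℤ` of the Iwahori–Hecke ring. -/
noncomputable def iw {G : Type} [Group G] {W : Type} [Group W] (I : Subgroup G) {N : Subgroup G}
    (π : N →* W) (w : W) : G → ℤ :=
  (IwI I π w).indicator fun _ => (1 : ℤ)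

/-- Convolution of `ℤ`-valued functions on `G` relative to `I`:
`(f ⋆ f')(x) = Σ_{yI ∈ G/I} f(y)·f'(y⁻¹x)` (the value of `f` at a left coset `yI` is computed
at a chosen representative; this is independent of the choices when `f` is right `I`-invariant
and `f'` is left `I`-invariant). -/
noncomputable def hconv {G : Type} [Group G] (I : Subgroup G) (f f' : G → ℤ) : G → ℤ :=
  fun x => ∑ᶠ y : G ⧸ I, f (Quotient.out y) * f' ((Quotient.out y)⁻¹ * x)

/-- The left cosets of `I` contained in a (right `I`-stable) subset `A ⊆ G`, viewed as the
image of `A` in `G/I`. -/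
def leftCosetsIn {G : Type} [Group G] (I : Subgroup G) (A : Set G) : Set (G ⧸ I) :=
  QuotientGroup.mk '' A

/-- A function `f : G → ℤ` belongs to the Iwahori–Hecke ring `H(G,I)` iff it is left and right
`I`-invariant and vanishes outside finitely many double cosets of `I`. -/
def IsHeckeElt {G : Type} [Group G] {W : Type} [Group W] (I : Subgroup G) {N : Subgroup G}
    (π : N →* W) (f : G → ℤ) : Prop :=
  (∀ i ∈ I, ∀ g : G, f (i * g) = f g) ∧ (∀ i ∈ I, ∀ g : G, f (g * i) = f g) ∧
    {w : W | ∃ g ∈ IwI I π w, f g ≠ 0}.Finite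

/-- The data and axioms of the Iwahori–Matsumoto setting. -/
structure IwahoriHeckeSetup (G W B : Type) [Group G] [Group W] (M : CoxeterMatrix B) where
  /-- the "Iwahori" subgroup -/
  I : Subgroup G
  /-- the subgroup `N` -/
  N : Subgroup G
  /-- the quotient map `N → W̃ = N/T`, `T = I ∩ N` -/
  π : N →* W
  π_surjective : Function.Surjective π
  /-- the kernel of `π` is exactly `T = I ∩ N` (so `T` is normal in `N` and `W̃ = N/T`) -/
  π_ker : ∀ n : N, π n = 1 ↔ (n : G) ∈ I
  /-- the normal subgroup `W_aff` of `W̃` -/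
  Waff : Subgroup W
  /-- the subgroup `Ω` of `W̃` -/
  Om : Subgroup W
  Waff_normal : Waff.Normal
  /-- `W̃ = W_aff · Ω` -/
  sd_prod : ∀ w : W, ∃ wa ∈ Waff, ∃ u ∈ Om, w = wa * u
  /-- `W_aff ∩ Ω = 1` -/
  sd_disj : Waff ⊓ Om = ⊥
  /-- the Coxeter system `(W_aff, S)`, `S = {simple b | b : B}` -/
  cs : CoxeterSystem M Waff
  /-- the length function of `(W_aff, S)`, extended to `W̃` -/
  len : W → ℕ
  len_spec : ∀ (wa : Waff) (u : Om), len ((wa : W) * (u : W)) = cs.length wa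
  /-- `q w` = the number of left cosets of `I` contained in `IwI` -/
  q : W → ℕ
  /-- (T0): `G` is covered by the double cosets `IwI`, `w ∈ W̃` ... -/
  T0_cover : ∀ g : G, ∃ w : W, g ∈ IwI I π w
  /-- (T0): ... and distinct double cosets are disjoint -/
  T0_disjoint : ∀ w w' : W, w ≠ w' → Disjoint (IwI I π w) (IwI I π w')
  /-- (T3): `sIw ⊆ IwI ∪ IswI` for all `s ∈ S`, `w ∈ W̃` -/
  T3 : ∀ (b : B) (w : W) (ns nw : N), π ns = (cs.simple b : W) → π nw = w →
      ∀ i ∈ I, (ns : G) * i * (nw : G) ∈ IwI I π w ∪ IwI I π ((cs.simple b : W) * w)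
  /-- (T4): `sIs ⊄ I` for all `s ∈ S` -/
  T4 : ∀ (b : B) (ns ns' : N), π ns = (cs.simple b : W) → π ns' = (cs.simple b : W) →
      ¬ (∀ i ∈ I, (ns : G) * i * (ns' : G) ∈ I)
  /-- (TΩ): representatives in `N` of elements of `Ω` normalize `I` -/
  TOm : ∀ n : N, π n ∈ Om → ∀ i ∈ I, (n : G) * i * (n : G)⁻¹ ∈ I
  /-- (TS): `uSu⁻¹ = S` for all `u ∈ Ω` -/
  TS : ∀ u ∈ Om, ∀ b : B, ∃ b' : B, u * (cs.simple b : W) * u⁻¹ = (cs.simple b' : W)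
  /-- (TF): every double coset `IwI` is a finite union of left cosets of `I`, and `q w` is
  their number -/
  TF : ∀ w : W, (leftCosetsIn I (IwI I π w)).Finite ∧
      q w = (leftCosetsIn I (IwI I π w)).ncard

/-! ### Auxiliary lemmas -/

namespace IwahoriHeckeSetup

variable {G W B : Type} [Group G] [Group W] {M : CoxeterMatrix B}
  (D : IwahoriHeckeSetup G W B M)

/-- The simple reflections as elements of `W`. -/
def sS (b : B) : W := ((D.cs.simple b : D.Waff) : W)

section Basic

lemma exists_rep (w : W) : ∃ n : D.N, D.π n = w := D.π_surjective w

lemma mem_IwI_left {i g : G} {w : W} (hi : i ∈ D.I) (hg : g ∈ IwI D.I D.π w) :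
    i * g ∈ IwI D.I D.π w := by
  obtain ⟨n, hn, i', hi', j, hj, rfl⟩ := hg
  exact ⟨n, hn, i * i', mul_mem hi hi', j, hj, by group⟩

lemma mem_IwI_right {i g : G} {w : W} (hi : i ∈ D.I) (hg : g ∈ IwI D.I D.π w) :
    g * i ∈ IwI D.I D.π w := by
  obtain ⟨n, hn, i', hi', j, hj, rfl⟩ := hg
  exact ⟨n, hn, i', hi', j * i, mul_mem hj hi, by group⟩

lemma rep_mem_IwI {n : D.N} {w : W} (hn : D.π n = w) : (n : G) ∈ IwI D.I D.π w :=
  ⟨n, hn, 1, one_mem _, 1, one_mem _, by group⟩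

lemma mem_IwI_iff_rep {n : D.N} {w : W} (hn : D.π n = w) (g : G) :
    g ∈ IwI D.I D.π w ↔ ∃ i ∈ D.I, ∃ j ∈ D.I, g = i * (n : G) * j := by
  constructor
  · rintro ⟨m, hm, i, hi, j, hj, rfl⟩
    have hk : ((m * n⁻¹ : D.N) : G) ∈ D.I := by
      refine (D.π_ker _).mp ?_
      rw [map_mul, map_inv, hm, hn, mul_inv_cancel]
    refine ⟨i * ((m * n⁻¹ : D.N) : G), mul_mem hi hk, j, hj, ?_⟩
    push_cast
    group
  · rintro ⟨i, hi, j, hj, rfl⟩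
    exact ⟨n, hn, i, hi, j, hj, rfl⟩

lemma inv_mem_IwI {g : G} {w : W} (hg : g ∈ IwI D.I D.π w) : g⁻¹ ∈ IwI D.I D.π w⁻¹ := by
  obtain ⟨n, hn, i, hi, j, hj, rfl⟩ := hg
  refine ⟨n⁻¹, by rw [map_inv, hn], j⁻¹, inv_mem hj, i⁻¹, inv_mem hi, ?_⟩
  push_cast
  group

lemma mem_IwI_one_iff {g : G} : g ∈ IwI D.I D.π 1 ↔ g ∈ D.I := by
  constructor
  · rintro ⟨n, hn, i, hi, j, hj, rfl⟩
    exact mul_mem (mul_mem hi ((D.π_ker n).mp hn)) hj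
  · intro hg
    exact ⟨1, map_one _, g, hg, 1, one_mem _, by simp⟩

lemma IwI_mul_sub {x y : W} {g : G} (hg : g ∈ IwI D.I D.π (x * y)) :
    ∃ a ∈ IwI D.I D.π x, ∃ b ∈ IwI D.I D.π y, g = a * b := by
  obtain ⟨nx, hnx⟩ := D.exists_rep x
  obtain ⟨ny, hny⟩ := D.exists_rep y
  have hxy : D.π (nx * ny) = x * y := by rw [map_mul, hnx, hny]
  obtain ⟨i, hi, j, hj, rfl⟩ := (D.mem_IwI_iff_rep hxy _).mp hg
  refine ⟨i * (nx : G), D.mem_IwI_left hi (D.rep_mem_IwI hnx), (ny : G) * j,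
    D.mem_IwI_right hj (D.rep_mem_IwI hny), ?_⟩
  push_cast
  group

lemma disj_IwI {w w' : W} (h : w ≠ w') {g : G} (hg : g ∈ IwI D.I D.π w)
    (hg' : g ∈ IwI D.I D.π w') : False :=
  Set.disjoint_left.mp (D.T0_disjoint w w' h) hg hg'

end Basic

section SimpleCoe

lemma coe_simple_mul_self (b : B) : D.sS b * D.sS b = 1 := by
  rw [sS, ← Subgroup.coe_mul, D.cs.simple_mul_simple_self b, OneMemClass.coe_one]

lemma coe_simple_inv (b : B) : (D.sS b)⁻¹ = D.sS b := by
  rw [eq_comm, eq_inv_iff_mul_eq_one, coe_simple_mul_self]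

lemma T3_left {b : B} {w : W} {a h : G} (ha : a ∈ IwI D.I D.π (D.sS b))
    (hh : h ∈ IwI D.I D.π w) :
    a * h ∈ IwI D.I D.π w ∪ IwI D.I D.π (D.sS b * w) := by
  obtain ⟨ns, hns, i₁, hi₁, j₁, hj₁, rfl⟩ := ha
  obtain ⟨nw, hnw, i₂, hi₂, j₂, hj₂, rfl⟩ := hh
  have key := D.T3 b w ns nw hns hnw (j₁ * i₂) (mul_mem hj₁ hi₂)
  have heq : i₁ * (ns : G) * j₁ * (i₂ * (nw : G) * j₂)
      = i₁ * ((ns : G) * (j₁ * i₂) * (nw : G)) * j₂ := by group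
  rw [heq]
  rcases key with hk | hk
  · exact Or.inl (D.mem_IwI_right hj₂ (D.mem_IwI_left hi₁ hk))
  · exact Or.inr (D.mem_IwI_right hj₂ (D.mem_IwI_left hi₁ hk))

lemma T3_right {b : B} {w : W} {h c : G} (hh : h ∈ IwI D.I D.π w)
    (hc : c ∈ IwI D.I D.π (D.sS b)) :
    h * c ∈ IwI D.I D.π w ∪ IwI D.I D.π (w * D.sS b) := by
  have hc' : c⁻¹ ∈ IwI D.I D.π (D.sS b) := by
    have := D.inv_mem_IwI hc
    rwa [D.coe_simple_inv] at this
  have key := D.T3_left hc' (D.inv_mem_IwI hh)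
  rcases key with hk | hk
  · left
    have := D.inv_mem_IwI hk
    rwa [mul_inv_rev, inv_inv, inv_inv, inv_inv] at this
  · right
    have := D.inv_mem_IwI hk
    rwa [mul_inv_rev, mul_inv_rev, inv_inv, inv_inv, inv_inv, D.coe_simple_inv] at this

end SimpleCoe

section Omega

lemma Om_conj_mem {n : D.N} (hn : D.π n ∈ D.Om) {i : G} (hi : i ∈ D.I) :
    ((n : G))⁻¹ * i * (n : G) ∈ D.I := by
  have := D.TOm n⁻¹ (by rw [map_inv]; exact inv_mem hn) i hi
  push_cast at this
  rwa [inv_inv] at this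

lemma Om_mul_left {u w : W} (hu : u ∈ D.Om) {a h : G} (ha : a ∈ IwI D.I D.π u)
    (hh : h ∈ IwI D.I D.π w) : a * h ∈ IwI D.I D.π (u * w) := by
  obtain ⟨nu, hnu, i₁, hi₁, j₁, hj₁, rfl⟩ := ha
  obtain ⟨nw, hnw, i₂, hi₂, j₂, hj₂, rfl⟩ := hh
  have hk : (nu : G) * (j₁ * i₂) * ((nu : G))⁻¹ ∈ D.I :=
    D.TOm nu (hnu ▸ hu) _ (mul_mem hj₁ hi₂)
  refine ⟨nu * nw, by rw [map_mul, hnu, hnw], i₁ * ((nu : G) * (j₁ * i₂) * ((nu : G))⁻¹),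
    mul_mem hi₁ hk, j₂, hj₂, ?_⟩
  push_cast
  group

lemma Om_mul_right {u x : W} (hu : u ∈ D.Om) {a h : G} (ha : a ∈ IwI D.I D.π x)
    (hh : h ∈ IwI D.I D.π u) : a * h ∈ IwI D.I D.π (x * u) := by
  obtain ⟨nx, hnx, i₁, hi₁, j₁, hj₁, rfl⟩ := ha
  obtain ⟨nu, hnu, i₂, hi₂, j₂, hj₂, rfl⟩ := hh
  have hk : ((nu : G))⁻¹ * (j₁ * i₂) * (nu : G) ∈ D.I :=
    D.Om_conj_mem (hnu ▸ hu) (mul_mem hj₁ hi₂)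
  refine ⟨nx * nu, by rw [map_mul, hnx, hnu], i₁, hi₁,
    (((nu : G))⁻¹ * (j₁ * i₂) * (nu : G)) * j₂, mul_mem hk hj₂, ?_⟩
  push_cast
  group

lemma Om_unique {u : W} (hu : u ∈ D.Om) {x₁ x₂ : G} (h₁ : x₁ ∈ IwI D.I D.π u)
    (h₂ : x₂ ∈ IwI D.I D.π u) : x₂⁻¹ * x₁ ∈ D.I := by
  obtain ⟨nu, hnu⟩ := D.exists_rep u
  obtain ⟨i₁, hi₁, j₁, hj₁, rfl⟩ := (D.mem_IwI_iff_rep hnu _).mp h₁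
  obtain ⟨i₂, hi₂, j₂, hj₂, rfl⟩ := (D.mem_IwI_iff_rep hnu _).mp h₂
  have hk : ((nu : G))⁻¹ * (i₂⁻¹ * i₁) * (nu : G) ∈ D.I :=
    D.Om_conj_mem (hnu ▸ hu) (mul_mem (inv_mem hi₂) hi₁)
  have heq : (i₂ * (nu : G) * j₂)⁻¹ * (i₁ * (nu : G) * j₁)
      = j₂⁻¹ * (((nu : G))⁻¹ * (i₂⁻¹ * i₁) * (nu : G)) * j₁ := by group
  rw [heq]
  exact mul_mem (mul_mem (inv_mem hj₂) hk) hj₁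

end Omega

end IwahoriHeckeSetup
namespace IwahoriHeckeSetup

variable {G W B : Type} [Group G] [Group W] {M : CoxeterMatrix B}
  (D : IwahoriHeckeSetup G W B M)

section Length

lemma conj_simple_word {u : W} (hu : u ∈ D.Om) (ω : List B) :
    ∃ ω' : List B, ω'.length = ω.length ∧
      u * ((D.cs.wordProd ω : D.Waff) : W) * u⁻¹ = ((D.cs.wordProd ω' : D.Waff) : W) := by
  induction ω with
  | nil => exact ⟨[], rfl, by simp⟩
  | cons i ω ih =>
    obtain ⟨ω', hlen, hconj⟩ := ih
    obtain ⟨b', hb'⟩ := D.TS u hu i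
    refine ⟨b' :: ω', by simp [hlen], ?_⟩
    rw [CoxeterSystem.wordProd_cons, CoxeterSystem.wordProd_cons]
    push_cast
    calc u * (((D.cs.simple i : D.Waff) : W) * ((D.cs.wordProd ω : D.Waff) : W)) * u⁻¹
        = (u * ((D.cs.simple i : D.Waff) : W) * u⁻¹) *
          (u * ((D.cs.wordProd ω : D.Waff) : W) * u⁻¹) := by group
      _ = ((D.cs.simple b' : D.Waff) : W) * ((D.cs.wordProd ω' : D.Waff) : W) := by
          rw [hb', hconj]

lemma conj_len_le {u : W} (hu : u ∈ D.Om) (wa : D.Waff) :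
    ∃ wa' : D.Waff, (wa' : W) = u * (wa : W) * u⁻¹ ∧
      D.cs.length wa' ≤ D.cs.length wa := by
  obtain ⟨ω, hlen, hprod⟩ := D.cs.exists_reduced_word wa
  obtain ⟨ω', hlen', hconj⟩ := D.conj_simple_word hu ω
  refine ⟨D.cs.wordProd ω', by rw [← hconj, ← hprod], ?_⟩
  calc D.cs.length (D.cs.wordProd ω') ≤ ω'.length := D.cs.length_wordProd_le ω'
    _ = ω.length := hlen'
    _ = D.cs.length wa := by rw [hprod]; exact hlen.eq.symm

lemma conj_len {u : W} (hu : u ∈ D.Om) (wa : D.Waff) :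
    ∃ wa' : D.Waff, (wa' : W) = u * (wa : W) * u⁻¹ ∧
      D.cs.length wa' = D.cs.length wa := by
  obtain ⟨wa', hconj, hle⟩ := D.conj_len_le hu wa
  obtain ⟨wa'', hconj', hle'⟩ := D.conj_len_le (inv_mem hu) wa'
  have : (wa'' : W) = (wa : W) := by rw [hconj', hconj]; group
  have hww : wa'' = wa := Subtype.ext this
  rw [hww] at hle'
  exact ⟨wa', hconj, le_antisymm hle hle'⟩

lemma len_decomp (w : W) : ∃ (wa : D.Waff) (u : W), u ∈ D.Om ∧ w = (wa : W) * u ∧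
    D.len w = D.cs.length wa := by
  obtain ⟨wa, hwa, u, hu, rfl⟩ := D.sd_prod w
  exact ⟨⟨wa, hwa⟩, u, hu, rfl, D.len_spec ⟨wa, hwa⟩ ⟨u, hu⟩⟩

lemma len_eq_of (wa : D.Waff) {u : W} (hu : u ∈ D.Om) :
    D.len ((wa : W) * u) = D.cs.length wa := D.len_spec wa ⟨u, hu⟩

lemma len_mul_le (x y : W) : D.len (x * y) ≤ D.len x + D.len y := by
  obtain ⟨a, u, hu, rfl, hx⟩ := D.len_decomp x
  obtain ⟨b, v, hv, rfl, hy⟩ := D.len_decomp y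
  obtain ⟨b', hb', hlb⟩ := D.conj_len hu b
  have heq : (a : W) * u * ((b : W) * v) = ((a * b' : D.Waff) : W) * (u * v) := by
    push_cast
    rw [hb']
    group
  rw [heq, D.len_eq_of _ (mul_mem hu hv), hx, hy, ← hlb]
  exact D.cs.length_mul_le a b'

lemma len_simple (b : B) : D.len (D.sS b) = 1 := by
  have := D.len_eq_of (D.cs.simple b) (one_mem D.Om)
  rw [mul_one, D.cs.length_simple] at this
  exact this

lemma len_simple_mul_le (b : B) (w : W) : D.len (D.sS b * w) ≤ D.len w + 1 := by
  have := D.len_mul_le (D.sS b) w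
  rw [D.len_simple] at this
  omega

lemma len_mul_simple_le (b : B) (w : W) : D.len (w * D.sS b) ≤ D.len w + 1 := by
  have := D.len_mul_le w (D.sS b)
  rw [D.len_simple] at this
  omega

lemma mem_Om_of_len_zero {w : W} (h : D.len w = 0) : w ∈ D.Om := by
  obtain ⟨a, u, hu, rfl, hx⟩ := D.len_decomp w
  have h0 : D.cs.length a = 0 := by rw [← hx]; exact h
  have : a = 1 := D.cs.length_eq_zero_iff.mp h0
  rw [this, OneMemClass.coe_one, one_mul]
  exact hu

lemma exists_left_descent' {w : W} (h : D.len w ≠ 0) :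
    ∃ (b : B) (v : W), w = D.sS b * v ∧ D.len v + 1 = D.len w := by
  obtain ⟨a, u, hu, rfl, hx⟩ := D.len_decomp w
  have ha : a ≠ 1 := fun h1 => h (by rw [hx, h1]; exact D.cs.length_one)
  obtain ⟨i, hi⟩ := D.cs.exists_leftDescent_of_ne_one ha
  have hlen := D.cs.isLeftDescent_iff.mp hi
  refine ⟨i, ((D.cs.simple i * a : D.Waff) : W) * u, ?_, ?_⟩
  · rw [sS]
    push_cast
    have hss : ((D.cs.simple i : D.Waff) : W) * ((D.cs.simple i : D.Waff) : W) = 1 :=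
      D.coe_simple_mul_self i
    have hgp : ((D.cs.simple i : D.Waff) : W) * (((D.cs.simple i : D.Waff) : W) * (a : W) * u)
        = (((D.cs.simple i : D.Waff) : W) * ((D.cs.simple i : D.Waff) : W)) * ((a : W) * u) := by
      group
    rw [hgp, hss, one_mul]
  · rw [D.len_eq_of _ hu, hlen, hx]

lemma exists_right_descent' {w : W} (h : D.len w ≠ 0) :
    ∃ (b : B) (v : W), w = v * D.sS b ∧ D.len v + 1 = D.len w := by
  obtain ⟨a, u, hu, rfl, hx⟩ := D.len_decomp w
  have ha : a ≠ 1 := fun h1 => h (by rw [hx, h1]; exact D.cs.length_one)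
  obtain ⟨i, hi⟩ := D.cs.exists_rightDescent_of_ne_one ha
  have hlen := D.cs.isRightDescent_iff.mp hi
  obtain ⟨b', hb'⟩ := D.TS u⁻¹ (inv_mem hu) i
  rw [inv_inv] at hb'
  refine ⟨b', ((a * D.cs.simple i : D.Waff) : W) * u, ?_, ?_⟩
  · rw [sS, ← hb']
    push_cast
    have hss : ((D.cs.simple i : D.Waff) : W) * ((D.cs.simple i : D.Waff) : W) = 1 :=
      D.coe_simple_mul_self i
    calc (a : W) * u
        = (a : W) * (((D.cs.simple i : D.Waff) : W) * ((D.cs.simple i : D.Waff) : W)) * u := by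
          rw [hss, mul_one]
      _ = (a : W) * ((D.cs.simple i : D.Waff) : W) * u *
          (u⁻¹ * ((D.cs.simple i : D.Waff) : W) * u) := by group
  · rw [D.len_eq_of _ hu, hlen, hx]

end Length

end IwahoriHeckeSetup
namespace IwahoriHeckeSetup

variable {G W B : Type} [Group G] [Group W] {M : CoxeterMatrix B}
  (D : IwahoriHeckeSetup G W B M)

section Core

/-- Key disjointness: if `ℓ(sw) = ℓ(w) + 1` then `IsI·IwI ∩ IwI = ∅`. -/
lemma Qlem (n : ℕ) : ∀ (b : B) (w : W), D.len w = n → D.len (D.sS b * w) = n + 1 →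
    ∀ a ∈ IwI D.I D.π (D.sS b), ∀ h ∈ IwI D.I D.π w, a * h ∉ IwI D.I D.π w := by
  induction n with
  | zero =>
    intro b w hw hsw a ha h hh hcon
    have hu : w ∈ D.Om := D.mem_Om_of_len_zero hw
    have hmem : a * h ∈ IwI D.I D.π (D.sS b * w) := D.Om_mul_right hu ha hh
    exact D.disj_IwI (by intro he; rw [he] at hsw; omega) hmem hcon
  | succ n ih =>
    intro b w hw hsw a ha h hh hcon
    obtain ⟨t, v, hvt, hlv⟩ := D.exists_right_descent' (w := w) (by omega)
    have hv : D.len v = n := by omega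
    subst hvt
    obtain ⟨p, hp, c, hc, rfl⟩ := D.IwI_mul_sub hh
    rcases D.T3_left ha hp with hap | hap
    · -- a * p ∈ IwI v : contradicts the inductive hypothesis
      have hlsv : D.len (D.sS b * v) = n + 1 := by
        have h1 := D.len_simple_mul_le b v
        have h2 := D.len_mul_simple_le t (D.sS b * v)
        rw [mul_assoc] at h2
        omega
      exact ih b v hv hlsv a ha p hp hap
    · -- a * p ∈ IwI (s * v)
      have hmem := D.T3_right hap hc
      rw [(mul_assoc a p c).symm] at hcon
      rw [mul_assoc (D.sS b) v (D.sS t)] at hmem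
      rcases hmem with hm | hm
      · refine D.disj_IwI (w := D.sS b * v) (w' := v * D.sS t) ?_ hm hcon
        intro he
        have hv' : D.sS b * (v * D.sS t) = v := by
          rw [← he]
          have : D.sS b * (D.sS b * v) = (D.sS b * D.sS b) * v := by group
          rw [this, D.coe_simple_mul_self, one_mul]
        rw [hv'] at hsw
        omega
      · refine D.disj_IwI (w := D.sS b * (v * D.sS t)) (w' := v * D.sS t) ?_ hm hcon
        intro he
        rw [he] at hsw
        omega

/-- If `ℓ(sw) = ℓ(w) + 1` then `IsI·IwI = IswI`. -/
lemma L1a {b : B} {w : W} (hlen : D.len (D.sS b * w) = D.len w + 1) (g : G) :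
    g ∈ IwI D.I D.π (D.sS b * w) ↔
      ∃ a ∈ IwI D.I D.π (D.sS b), ∃ h ∈ IwI D.I D.π w, g = a * h := by
  constructor
  · exact fun hg => D.IwI_mul_sub hg
  · rintro ⟨a, ha, h, hh, rfl⟩
    rcases D.T3_left ha hh with hm | hm
    · exact absurd hm (D.Qlem (D.len w) b w rfl hlen a ha h hh)
    · exact hm

/-- Uniqueness of the `IsI`-coset in the decomposition, when `ℓ(sw) = ℓ(w) + 1`. -/
lemma L1b {b : B} {w : W} (hlen : D.len (D.sS b * w) = D.len w + 1) {g x₁ x₂ : G}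
    (hx₁ : x₁ ∈ IwI D.I D.π (D.sS b)) (hx₂ : x₂ ∈ IwI D.I D.π (D.sS b))
    (h₁ : x₁⁻¹ * g ∈ IwI D.I D.π w) (h₂ : x₂⁻¹ * g ∈ IwI D.I D.π w) :
    x₂⁻¹ * x₁ ∈ D.I := by
  have hx₂' : x₂⁻¹ ∈ IwI D.I D.π (D.sS b) := by
    have := D.inv_mem_IwI hx₂
    rwa [D.coe_simple_inv] at this
  rcases D.T3_left hx₂' hx₁ with hm | hm
  · -- x₂⁻¹ * x₁ ∈ IsI : contradiction
    exfalso
    have hmem : x₂⁻¹ * g ∈ IwI D.I D.π (D.sS b * w) := by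
      have : x₂⁻¹ * g = (x₂⁻¹ * x₁) * (x₁⁻¹ * g) := by group
      rw [this]
      exact (D.L1a hlen _).mpr ⟨_, hm, _, h₁, rfl⟩
    exact D.disj_IwI (by intro he; rw [← he] at hlen; omega) h₂ hmem
  · rw [D.coe_simple_mul_self] at hm
    exact D.mem_IwI_one_iff.mp hm

/-- The master lemma: product formula and coset uniqueness for length-additive products. -/
lemma Plem (n : ℕ) : ∀ w w' : W, D.len w = n → D.len w + D.len w' = D.len (w * w') →
    (∀ g : G, g ∈ IwI D.I D.π (w * w') ↔
      ∃ a ∈ IwI D.I D.π w, ∃ c ∈ IwI D.I D.π w', g = a * c) ∧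
    (∀ g x₁ x₂ : G, x₁ ∈ IwI D.I D.π w → x₂ ∈ IwI D.I D.π w →
      x₁⁻¹ * g ∈ IwI D.I D.π w' → x₂⁻¹ * g ∈ IwI D.I D.π w' → x₂⁻¹ * x₁ ∈ D.I) := by
  induction n with
  | zero =>
    intro w w' hw _
    have hu : w ∈ D.Om := D.mem_Om_of_len_zero hw
    constructor
    · intro g
      constructor
      · exact fun hg => D.IwI_mul_sub hg
      · rintro ⟨a, ha, c, hc, rfl⟩
        exact D.Om_mul_left hu ha hc
    · intro g x₁ x₂ h₁ h₂ _ _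
      exact D.Om_unique hu h₁ h₂
  | succ n ih =>
    intro w w' hw hadd
    obtain ⟨b, v, rfl, hlv⟩ := D.exists_left_descent' (w := w) (by omega)
    have hv : D.len v = n := by omega
    have hsv : D.len (D.sS b * v) = D.len v + 1 := by omega
    have hvw' : D.len v + D.len w' = D.len (v * w') := by
      have h1 : D.len (v * w') ≤ D.len v + D.len w' := D.len_mul_le v w'
      have h2 : D.len (D.sS b * (v * w')) ≤ D.len (v * w') + 1 := D.len_simple_mul_le b (v * w')
      rw [← mul_assoc] at h2
      omega
    have hsvw' : D.len (D.sS b * (v * w')) = D.len (v * w') + 1 := by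
      rw [← mul_assoc]
      omega
    obtain ⟨IH1, IH2⟩ := ih v w' hv hvw'
    constructor
    · intro g
      constructor
      · intro hg
        have hg' : g ∈ IwI D.I D.π (D.sS b * (v * w')) := by rwa [← mul_assoc]
        obtain ⟨a, ha, h, hh, rfl⟩ := (D.L1a hsvw' g).mp hg'
        obtain ⟨p, hp, c, hc, rfl⟩ := (IH1 h).mp hh
        refine ⟨a * p, (D.L1a hsv _).mpr ⟨a, ha, p, hp, rfl⟩, c, hc, by group⟩
      · rintro ⟨x, hx, c, hc, rfl⟩
        obtain ⟨a, ha, p, hp, rfl⟩ := (D.L1a hsv x).mp hx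
        have : a * p * c ∈ IwI D.I D.π (D.sS b * (v * w')) := by
          refine (D.L1a hsvw' _).mpr ⟨a, ha, p * c, (IH1 _).mpr ⟨p, hp, c, hc, rfl⟩, by group⟩
        rwa [← mul_assoc] at this
    · intro g x₁ x₂ h₁ h₂ hg₁ hg₂
      obtain ⟨a₁, ha₁, p₁, hp₁, rfl⟩ := (D.L1a hsv x₁).mp h₁
      obtain ⟨a₂, ha₂, p₂, hp₂, rfl⟩ := (D.L1a hsv x₂).mp h₂
      have hag₁ : a₁⁻¹ * g ∈ IwI D.I D.π (v * w') := by
        have heq : a₁⁻¹ * g = p₁ * ((a₁ * p₁)⁻¹ * g) := by group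
        rw [heq]
        exact (IH1 _).mpr ⟨p₁, hp₁, _, hg₁, rfl⟩
      have hag₂ : a₂⁻¹ * g ∈ IwI D.I D.π (v * w') := by
        have heq : a₂⁻¹ * g = p₂ * ((a₂ * p₂)⁻¹ * g) := by group
        rw [heq]
        exact (IH1 _).mpr ⟨p₂, hp₂, _, hg₂, rfl⟩
      have haa : a₂⁻¹ * a₁ ∈ D.I := D.L1b hsvw' ha₁ ha₂ hag₁ hag₂
      -- now apply uniqueness for (v, w') to the element a₁⁻¹ * g
      have hz₂ : a₁⁻¹ * (a₂ * p₂) ∈ IwI D.I D.π v := by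
        have heq : a₁⁻¹ * (a₂ * p₂) = (a₂⁻¹ * a₁)⁻¹ * p₂ := by group
        rw [heq]
        exact D.mem_IwI_left (inv_mem haa) hp₂
      have hkey := IH2 (a₁⁻¹ * g) p₁ (a₁⁻¹ * (a₂ * p₂)) hp₁ hz₂
        (by have : p₁⁻¹ * (a₁⁻¹ * g) = (a₁ * p₁)⁻¹ * g := by group
            rw [this]; exact hg₁)
        (by have : (a₁⁻¹ * (a₂ * p₂))⁻¹ * (a₁⁻¹ * g) = (a₂ * p₂)⁻¹ * g := by group
            rw [this]; exact hg₂)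
      have heq : (a₂ * p₂)⁻¹ * (a₁ * p₁) = (a₁⁻¹ * (a₂ * p₂))⁻¹ * p₁ := by group
      rw [heq]
      exact hkey

end Core

end IwahoriHeckeSetup
namespace IwahoriHeckeSetup

variable {G W B : Type} [Group G] [Group W] {M : CoxeterMatrix B}
  (D : IwahoriHeckeSetup G W B M)

section Quot

lemma mk_out (y : G ⧸ D.I) : (QuotientGroup.mk (Quotient.out y) : G ⧸ D.I) = y :=
  Quotient.out_eq y

lemma out_diff (a : G) : a⁻¹ * Quotient.out (QuotientGroup.mk a : G ⧸ D.I) ∈ D.I :=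
  QuotientGroup.eq.mp (D.mk_out (QuotientGroup.mk a)).symm

lemma mk_eq_of_diff {a c : G} (h : a⁻¹ * c ∈ D.I) :
    (QuotientGroup.mk a : G ⧸ D.I) = QuotientGroup.mk c :=
  QuotientGroup.eq.mpr h

/-- If `out y` lies in a subset `A` of `G`, then `y` is a left coset in `A`. -/
lemma mem_leftCosetsIn {A : Set G} {y : G ⧸ D.I} (h : Quotient.out y ∈ A) :
    y ∈ leftCosetsIn D.I A :=
  ⟨Quotient.out y, h, D.mk_out y⟩

lemma out_mem_of_mem {w : W} {y : G ⧸ D.I} (h : y ∈ leftCosetsIn D.I (IwI D.I D.π w)) :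
    Quotient.out y ∈ IwI D.I D.π w := by
  obtain ⟨c, hc, rfl⟩ := h
  have hd := D.out_diff c
  have : Quotient.out (QuotientGroup.mk c : G ⧸ D.I)
      = c * (c⁻¹ * Quotient.out (QuotientGroup.mk c : G ⧸ D.I)) := by group
  rw [this]
  exact D.mem_IwI_right hd hc

lemma iw_of_mem {w : W} {g : G} (h : g ∈ IwI D.I D.π w) : iw D.I D.π w g = 1 :=
  Set.indicator_of_mem h _

lemma iw_of_not_mem {w : W} {g : G} (h : g ∉ IwI D.I D.π w) : iw D.I D.π w g = 0 :=
  Set.indicator_of_notMem h _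

end Quot

section Conv

/-- The braid relation, in convolution form. -/
lemma braid (w w' : W) (hlen : D.len w + D.len w' = D.len (w * w')) :
    hconv D.I (iw D.I D.π w) (iw D.I D.π w') = iw D.I D.π (w * w') := by
  obtain ⟨HP1, HP2⟩ := D.Plem (D.len w) w w' rfl hlen
  funext x
  show (∑ᶠ y : G ⧸ D.I, iw D.I D.π w (Quotient.out y) *
      iw D.I D.π w' ((Quotient.out y)⁻¹ * x)) = iw D.I D.π (w * w') x
  by_cases hx : x ∈ IwI D.I D.π (w * w')
  · obtain ⟨a, ha, c, hc, hxac⟩ := (HP1 x).mp hx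
    rw [finsum_eq_single _ (QuotientGroup.mk a : G ⧸ D.I) ?side]
    case side =>
      intro y hy
      by_cases hm1 : Quotient.out y ∈ IwI D.I D.π w
      · by_cases hm2 : (Quotient.out y)⁻¹ * x ∈ IwI D.I D.π w'
        · exfalso
          apply hy
          have hdiff : a⁻¹ * Quotient.out y ∈ D.I :=
            HP2 x (Quotient.out y) a hm1 ha hm2 (by rw [hxac]; simpa using hc)
          rw [← D.mk_out y]
          exact (D.mk_eq_of_diff hdiff).symm
        · rw [D.iw_of_not_mem hm2]; ring
      · rw [D.iw_of_not_mem hm1]; ring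
    · -- value at the coset of `a`
      have hd : a⁻¹ * Quotient.out (QuotientGroup.mk a : G ⧸ D.I) ∈ D.I := D.out_diff a
      have hout : Quotient.out (QuotientGroup.mk a : G ⧸ D.I)
          = a * (a⁻¹ * Quotient.out (QuotientGroup.mk a : G ⧸ D.I)) := by group
      have hm1 : Quotient.out (QuotientGroup.mk a : G ⧸ D.I) ∈ IwI D.I D.π w := by
        rw [hout]; exact D.mem_IwI_right hd ha
      have hm2 : (Quotient.out (QuotientGroup.mk a : G ⧸ D.I))⁻¹ * x ∈ IwI D.I D.π w' := by
        have : (Quotient.out (QuotientGroup.mk a : G ⧸ D.I))⁻¹ * x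
            = (a⁻¹ * Quotient.out (QuotientGroup.mk a : G ⧸ D.I))⁻¹ * (a⁻¹ * x) := by group
        rw [this, hxac]
        exact D.mem_IwI_left (inv_mem hd) (by simpa using hc)
      rw [D.iw_of_mem hm1, D.iw_of_mem hm2, D.iw_of_mem hx]
      norm_num
  · rw [D.iw_of_not_mem hx]
    apply finsum_eq_zero_of_forall_eq_zero
    intro y
    by_cases hm1 : Quotient.out y ∈ IwI D.I D.π w
    · by_cases hm2 : (Quotient.out y)⁻¹ * x ∈ IwI D.I D.π w'
      · exfalso
        apply hx
        refine (HP1 x).mpr ⟨Quotient.out y, hm1, (Quotient.out y)⁻¹ * x, hm2, by group⟩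
      · rw [D.iw_of_not_mem hm2]; ring
    · rw [D.iw_of_not_mem hm1]; ring

/-- The quadratic relation, in convolution form. -/
lemma quadratic (b : B) :
    hconv D.I (iw D.I D.π (D.sS b)) (iw D.I D.π (D.sS b)) =
      fun g => (D.q (D.sS b) : ℤ) * iw D.I D.π 1 g +
        ((D.q (D.sS b) : ℤ) - 1) * iw D.I D.π (D.sS b) g := by
  have hfin := (D.TF (D.sS b)).1
  have hq := (D.TF (D.sS b)).2
  have hone_ne : (1 : W) ≠ D.sS b := by
    intro h
    have := D.len_simple b
    rw [← h] at this
    have h1 : D.len (1 : W) = 0 := by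
      have := D.len_eq_of (1 : D.Waff) (one_mem D.Om)
      simpa [D.cs.length_one] using this
    omega
  -- membership of `out y` in `IsI` for cosets in `IsI`
  funext g
  classical
  show (∑ᶠ y : G ⧸ D.I, iw D.I D.π (D.sS b) (Quotient.out y) *
      iw D.I D.π (D.sS b) ((Quotient.out y)⁻¹ * g)) = _
  have hsupp : (Function.support fun y : G ⧸ D.I => iw D.I D.π (D.sS b) (Quotient.out y) *
      iw D.I D.π (D.sS b) ((Quotient.out y)⁻¹ * g)) ⊆ ↑hfin.toFinset := by
    intro y hy
    rw [Set.Finite.coe_toFinset]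
    apply D.mem_leftCosetsIn
    by_contra hm
    rw [Function.mem_support, D.iw_of_not_mem hm, zero_mul] at hy
    exact hy rfl
  rw [finsum_eq_finset_sum_of_support_subset _ hsupp]
  have hcard : hfin.toFinset.card = D.q (D.sS b) := by
    rw [hq, Set.ncard_eq_toFinset_card _ hfin]
  by_cases hg1 : g ∈ D.I
  · -- `g ∈ I` : every summand is `1`
    have hall : ∀ y ∈ hfin.toFinset, iw D.I D.π (D.sS b) (Quotient.out y) *
        iw D.I D.π (D.sS b) ((Quotient.out y)⁻¹ * g) = 1 := by
      intro y hy
      have hmem : Quotient.out y ∈ IwI D.I D.π (D.sS b) :=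
        D.out_mem_of_mem (hfin.mem_toFinset.mp hy)
      have hmem2 : (Quotient.out y)⁻¹ * g ∈ IwI D.I D.π (D.sS b) := by
        have h1 : (Quotient.out y)⁻¹ ∈ IwI D.I D.π (D.sS b) := by
          have := D.inv_mem_IwI hmem
          rwa [D.coe_simple_inv] at this
        exact D.mem_IwI_right hg1 h1
      rw [D.iw_of_mem hmem, D.iw_of_mem hmem2]
      norm_num
    rw [Finset.sum_congr rfl hall, Finset.sum_const, hcard]
    have hgm : g ∈ IwI D.I D.π (1 : W) := D.mem_IwI_one_iff.mpr hg1
    have hgn : g ∉ IwI D.I D.π (D.sS b) := fun hc => D.disj_IwI hone_ne hgm hc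
    rw [D.iw_of_mem hgm, D.iw_of_not_mem hgn]
    simp
  by_cases hg2 : g ∈ IwI D.I D.π (D.sS b)
  · -- `g ∈ IsI` : summand at the coset of `g` is `0`, all others are `1`
    have hy₀ : (QuotientGroup.mk g : G ⧸ D.I) ∈ hfin.toFinset := by
      rw [Set.Finite.mem_toFinset]
      exact ⟨g, hg2, rfl⟩
    rw [← Finset.add_sum_erase _ _ hy₀]
    have hzero : iw D.I D.π (D.sS b) (Quotient.out (QuotientGroup.mk g : G ⧸ D.I)) *
        iw D.I D.π (D.sS b) ((Quotient.out (QuotientGroup.mk g : G ⧸ D.I))⁻¹ * g) = 0 := by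
      have hd := D.out_diff g
      have : (Quotient.out (QuotientGroup.mk g : G ⧸ D.I))⁻¹ * g
          = (g⁻¹ * Quotient.out (QuotientGroup.mk g : G ⧸ D.I))⁻¹ := by group
      have hmem : (Quotient.out (QuotientGroup.mk g : G ⧸ D.I))⁻¹ * g ∈ D.I := by
        rw [this]; exact inv_mem hd
      have hnot : (Quotient.out (QuotientGroup.mk g : G ⧸ D.I))⁻¹ * g ∉
          IwI D.I D.π (D.sS b) := fun hc =>
        D.disj_IwI hone_ne (D.mem_IwI_one_iff.mpr hmem) hc
      rw [D.iw_of_not_mem hnot]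
      ring
    have hall : ∀ y ∈ hfin.toFinset.erase (QuotientGroup.mk g : G ⧸ D.I),
        iw D.I D.π (D.sS b) (Quotient.out y) *
        iw D.I D.π (D.sS b) ((Quotient.out y)⁻¹ * g) = 1 := by
      intro y hy
      obtain ⟨hyne, hym⟩ := Finset.mem_erase.mp hy
      have hmem : Quotient.out y ∈ IwI D.I D.π (D.sS b) :=
        D.out_mem_of_mem (hfin.mem_toFinset.mp hym)
      have hinv : (Quotient.out y)⁻¹ ∈ IwI D.I D.π (D.sS b) := by
        have := D.inv_mem_IwI hmem
        rwa [D.coe_simple_inv] at this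
      have hmem2 : (Quotient.out y)⁻¹ * g ∈ IwI D.I D.π (D.sS b) := by
        rcases D.T3_left hinv hg2 with hm | hm
        · exact hm
        · exfalso
          rw [D.coe_simple_mul_self] at hm
          have hI : (Quotient.out y)⁻¹ * g ∈ D.I := D.mem_IwI_one_iff.mp hm
          apply hyne
          rw [← D.mk_out y]
          apply D.mk_eq_of_diff
          have : (Quotient.out y) ⁻¹ * g = ((Quotient.out y)⁻¹ * g) := rfl
          simpa using hI
      rw [D.iw_of_mem hmem, D.iw_of_mem hmem2]
      norm_num
    rw [hzero, Finset.sum_congr rfl hall, Finset.sum_const, Finset.card_erase_of_mem hy₀,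
      hcard]
    have hgn : g ∉ IwI D.I D.π (1 : W) := fun hc =>
      D.disj_IwI hone_ne hc hg2
    rw [D.iw_of_mem hg2, D.iw_of_not_mem hgn]
    have hqpos : 1 ≤ D.q (D.sS b) := by
      rw [← hcard]
      exact Finset.card_pos.mpr ⟨_, hy₀⟩
    simp only [nsmul_eq_mul, mul_one, smul_eq_mul]
    omega
  · -- `g ∉ I ∪ IsI` : every summand is `0`
    have hall : ∀ y ∈ hfin.toFinset, iw D.I D.π (D.sS b) (Quotient.out y) *
        iw D.I D.π (D.sS b) ((Quotient.out y)⁻¹ * g) = 0 := by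
      intro y hy
      by_cases hm2 : (Quotient.out y)⁻¹ * g ∈ IwI D.I D.π (D.sS b)
      · exfalso
        have hmem : Quotient.out y ∈ IwI D.I D.π (D.sS b) :=
          D.out_mem_of_mem (hfin.mem_toFinset.mp hy)
        have hgeq : g = Quotient.out y * ((Quotient.out y)⁻¹ * g) := by group
        rcases D.T3_left hmem hm2 with hm | hm
        · exact hg2 (by rw [hgeq]; exact hm)
        · rw [D.coe_simple_mul_self] at hm
          exact hg1 (D.mem_IwI_one_iff.mp (by rw [hgeq]; exact hm))
      · rw [D.iw_of_not_mem hm2]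
        ring
    rw [Finset.sum_congr rfl hall, Finset.sum_const]
    have hgn1 : g ∉ IwI D.I D.π (1 : W) := fun hc => hg1 (D.mem_IwI_one_iff.mp hc)
    rw [D.iw_of_not_mem hg2, D.iw_of_not_mem hgn1]
    simp

end Conv

end IwahoriHeckeSetup
/-- **The Iwahori–Matsumoto presentation** (braid and quadratic relations): in the
Iwahori–Hecke ring `H(G,I)`, one has
`i_w ⋆ i_{w'} = i_{ww'}` whenever `ℓ(w) + ℓ(w') = ℓ(ww')`, and
`i_s ⋆ i_s = q_s · i_1 + (q_s − 1) · i_s` for every simple reflection `s ∈ S`. -/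
theorem iwahori_matsumoto_presentation {G W B : Type} [Group G] [Group W]
    {M : CoxeterMatrix B} (D : IwahoriHeckeSetup G W B M) :
    (∀ w w' : W, D.len w + D.len w' = D.len (w * w') →
        hconv D.I (iw D.I D.π w) (iw D.I D.π w') = iw D.I D.π (w * w')) ∧
    (∀ b : B,
        hconv D.I (iw D.I D.π (D.cs.simple b : W)) (iw D.I D.π (D.cs.simple b : W)) =
          fun g => (D.q (D.cs.simple b : W) : ℤ) * iw D.I D.π 1 g +
            ((D.q (D.cs.simple b : W) : ℤ) - 1) * iw D.I D.π (D.cs.simple b : W) g) := by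
  exact ⟨fun w w' h => D.braid w w' h, fun b => D.quadratic b⟩
end

section
/- If w ∈ W̃ is written as w = s₁·s₂⋯s_r·u with s₁,…,s_r ∈ S, u ∈ Ω and r = ℓ(w) (a reduced decomposition), then q_w = q_{s₁}·q_{s₂}⋯q_{s_r}. -/
open scoped Pointwise

namespace IwahoriAux

variable {G W B : Type} [Group G] [Group W] {M : CoxeterMatrix B}
  (D : IwahoriHeckeSetup G W B M)

lemma mem_mk {v : W} (n : D.N) (hn : D.π n = v) {i j : G} (hi : i ∈ D.I) (hj : j ∈ D.I) :
    i * (n : G) * j ∈ IwI D.I D.π v :=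
  ⟨n, hn, i, hi, j, hj, rfl⟩

lemma rep_mem {v : W} (n : D.N) (hn : D.π n = v) : (n : G) ∈ IwI D.I D.π v :=
  ⟨n, hn, 1, one_mem _, 1, one_mem _, by group⟩

lemma mul_left_mem {v : W} {i g : G} (hi : i ∈ D.I) (hg : g ∈ IwI D.I D.π v) :
    i * g ∈ IwI D.I D.π v := by
  obtain ⟨n, hn, a, ha, b, hb, rfl⟩ := hg
  exact ⟨n, hn, i * a, mul_mem hi ha, b, hb, by group⟩

lemma mul_right_mem {v : W} {g j : G} (hg : g ∈ IwI D.I D.π v) (hj : j ∈ D.I) :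
    g * j ∈ IwI D.I D.π v := by
  obtain ⟨n, hn, a, ha, b, hb, rfl⟩ := hg
  exact ⟨n, hn, a, ha, b * j, mul_mem hb hj, by group⟩

lemma inv_mem_IwI {v : W} {g : G} (hg : g ∈ IwI D.I D.π v) : g⁻¹ ∈ IwI D.I D.π v⁻¹ := by
  obtain ⟨n, hn, a, ha, b, hb, rfl⟩ := hg
  exact ⟨n⁻¹, by rw [map_inv, hn], b⁻¹, inv_mem hb, a⁻¹, inv_mem ha, by push_cast; group⟩

lemma IwI_one : IwI D.I D.π 1 = (D.I : Set G) := by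
  ext g
  constructor
  · rintro ⟨n, hn, a, ha, b, hb, rfl⟩
    exact mul_mem (mul_mem ha ((D.π_ker n).mp hn)) hb
  · intro hg
    exact ⟨1, map_one _, g, hg, 1, one_mem _, by simp⟩

lemma eq_of_mem_mem {v v' : W} {x : G} (h : x ∈ IwI D.I D.π v) (h' : x ∈ IwI D.I D.π v') :
    v = v' := by
  by_contra hne
  exact Set.disjoint_left.mp (D.T0_disjoint v v' hne) h h'

/-- Any two elements of the same double coset differ by elements of `I` on both sides. -/
lemma exists_sandwich {v : W} {x y : G} (hx : x ∈ IwI D.I D.π v) (hy : y ∈ IwI D.I D.π v) :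
    ∃ i ∈ D.I, ∃ j ∈ D.I, y = i * x * j := by
  obtain ⟨n, hn, a, ha, b, hb, rfl⟩ := hx
  obtain ⟨n', hn', a', ha', b', hb', rfl⟩ := hy
  have hk : ((n⁻¹ * n' : D.N) : G) ∈ D.I := by
    apply (D.π_ker _).mp
    rw [map_mul, map_inv, hn, hn', inv_mul_cancel]
  refine ⟨a' * a⁻¹, mul_mem ha' (inv_mem ha), b⁻¹ * ((n⁻¹ * n' : D.N) : G) * b',
    mul_mem (mul_mem (inv_mem hb) hk) hb', ?_⟩
  push_cast
  group

/-- Left version of (T3) for elements of double cosets. -/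
lemma T3L (b : B) (v : W) {g h : G} (hg : g ∈ IwI D.I D.π (D.cs.simple b : W))
    (hh : h ∈ IwI D.I D.π v) :
    g * h ∈ IwI D.I D.π v ∪ IwI D.I D.π ((D.cs.simple b : W) * v) := by
  obtain ⟨ns, hns, a, ha, c, hc, rfl⟩ := hg
  obtain ⟨nw, hnw, a', ha', c', hc', rfl⟩ := hh
  have key := D.T3 b v ns nw hns hnw (c * a') (mul_mem hc ha')
  have heq : a * (ns : G) * c * (a' * (nw : G) * c') =
      a * ((ns : G) * (c * a') * (nw : G)) * c' := by group
  rw [heq]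
  rcases key with hk | hk
  · exact Or.inl (mul_right_mem D (mul_left_mem D ha hk) hc')
  · exact Or.inr (mul_right_mem D (mul_left_mem D ha hk) hc')

lemma simple_coe_inv (b : B) : (D.cs.simple b : W)⁻¹ = (D.cs.simple b : W) := by
  rw [← InvMemClass.coe_inv, D.cs.inv_simple]

/-- Right version of (T3). -/
lemma T3R (b : B) (v : W) {g h : G} (hg : g ∈ IwI D.I D.π v)
    (hh : h ∈ IwI D.I D.π (D.cs.simple b : W)) :
    g * h ∈ IwI D.I D.π v ∪ IwI D.I D.π (v * (D.cs.simple b : W)) := by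
  have h1 : h⁻¹ ∈ IwI D.I D.π (D.cs.simple b : W) := by
    have := inv_mem_IwI D hh
    rwa [simple_coe_inv] at this
  have h2 := T3L D b v⁻¹ h1 (inv_mem_IwI D hg)
  rcases h2 with hk | hk
  · have := inv_mem_IwI D hk
    rw [show (h⁻¹ * g⁻¹)⁻¹ = g * h by group, inv_inv] at this
    exact Or.inl this
  · have := inv_mem_IwI D hk
    rw [show (h⁻¹ * g⁻¹)⁻¹ = g * h by group, mul_inv_rev, inv_inv, simple_coe_inv] at this
    exact Or.inr this

/-- Right multiplication by a representative of an element of `Ω`. -/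
lemma mul_om_mem {v : W} (n : D.N) (hn : D.π n ∈ D.Om) {g : G} (hg : g ∈ IwI D.I D.π v) :
    g * (n : G) ∈ IwI D.I D.π (v * D.π n) := by
  obtain ⟨m, hm, a, ha, c, hc, rfl⟩ := hg
  have hc' : (n : G)⁻¹ * c * (n : G) ∈ D.I := by
    have := D.TOm n⁻¹ (by rw [map_inv]; exact inv_mem hn) c hc
    simpa using this
  exact ⟨m * n, by rw [map_mul, hm], a, ha, (n : G)⁻¹ * c * (n : G), hc', by push_cast; group⟩

lemma om_right_transfer {v : W} (n : D.N) (hn : D.π n ∈ D.Om) {g : G}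
    (hg : g ∈ IwI D.I D.π (v * D.π n)) : g * (n : G)⁻¹ ∈ IwI D.I D.π v := by
  have := mul_om_mem D n⁻¹ (by rw [map_inv]; exact inv_mem hn) hg
  rw [map_inv] at this
  simpa [mul_assoc] using this

/-- Key product formula: if `ℓ(s·wa) = ℓ(wa) + 1` then `IsI · I(wa·u)I` is disjoint from
`I(wa·u)I`. -/
lemma disjA (b : B) : ∀ r : ℕ, ∀ wa : D.Waff, ∀ u : W, u ∈ D.Om →
    D.cs.length wa = r →
    D.cs.length (D.cs.simple b * wa) = D.cs.length wa + 1 →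
    ∀ g h : G, g ∈ IwI D.I D.π (D.cs.simple b : W) →
      h ∈ IwI D.I D.π ((wa : W) * u) →
      g * h ∉ IwI D.I D.π ((wa : W) * u) := by
  intro r
  induction r using Nat.strong_induction_on with
  | _ r IH =>
    intro wa u hu hr hlen g h hg hh hmem
    rcases Nat.eq_zero_or_pos r with hr0 | hrpos
    · subst hr0
      have hwa1 : wa = 1 := D.cs.length_eq_zero_iff.mp hr
      subst hwa1
      rw [show ((1 : D.Waff) : W) * u = u by simp] at hh hmem
      obtain ⟨m, hm⟩ := D.π_surjective u
      have hmo : D.π m ∈ D.Om := by rw [hm]; exact hu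
      have hj : h * (m : G)⁻¹ ∈ IwI D.I D.π 1 := by
        apply om_right_transfer D m hmo
        rwa [one_mul, hm]
      rw [IwI_one D] at hj
      have hgh : g * h ∈ IwI D.I D.π ((D.cs.simple b : W) * u) := by
        have h1 : g * (h * (m : G)⁻¹) ∈ IwI D.I D.π (D.cs.simple b : W) :=
          mul_right_mem D hg hj
        have h2 := mul_om_mem D m hmo h1
        rw [hm] at h2
        rwa [show g * (h * (m : G)⁻¹) * (m : G) = g * h by group] at h2
      have heq := eq_of_mem_mem D hmem hgh
      have hs1 : (D.cs.simple b : W) = 1 := by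
        have h9 : (D.cs.simple b : W) * u = 1 * u := by rw [one_mul, ← heq]
        exact mul_right_cancel h9
      have hs2 : D.cs.simple b = 1 := Subtype.ext (by rw [hs1]; rfl)
      have := D.cs.length_simple b
      rw [hs2] at this
      simp at this
    · have hwane : wa ≠ 1 := by
        intro h1; rw [h1] at hr; simp at hr; omega
      obtain ⟨b₀, hd⟩ := D.cs.exists_rightDescent_of_ne_one hwane
      have hlt := D.cs.isRightDescent_iff.mp hd
      set t := D.cs.simple b₀ with ht
      set wa' := wa * t with hwa'
      have hcancel : wa' * t = wa := by
        rw [hwa', mul_assoc, D.cs.simple_mul_simple_self, mul_one]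
      have hlwa' : D.cs.length wa' = r - 1 := by omega
      have hlen' : D.cs.length (D.cs.simple b * wa') = D.cs.length wa' + 1 := by
        rcases D.cs.length_simple_mul wa' b with h1 | h2
        · exact h1
        · exfalso
          have h3 := D.cs.length_mul_le (D.cs.simple b * wa') t
          rw [mul_assoc, hcancel, D.cs.length_simple] at h3
          omega
      obtain ⟨b₁, hb₁⟩ := D.TS u⁻¹ (inv_mem hu) b₀
      rw [inv_inv] at hb₁
      obtain ⟨n'', hn''⟩ := D.π_surjective ((wa' : W) * u)
      obtain ⟨nt, hnt⟩ := D.π_surjective (D.cs.simple b₁ : W)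
      have e0 : (wa' : W) * (t : W) = (wa : W) := by
        rw [← Subgroup.coe_mul, hcancel]
      have e0' : (wa : W) * (t : W) = (wa' : W) := by
        rw [hwa', Subgroup.coe_mul]
      have e1 : ((wa' : W) * u) * (D.cs.simple b₁ : W) = (wa : W) * u := by
        rw [← hb₁, show (wa' : W) * u * (u⁻¹ * (t : W) * u) = ((wa' : W) * (t : W)) * u
          by group, e0]
      have e2 : ((wa : W) * u) * (D.cs.simple b₁ : W) = (wa' : W) * u := by
        rw [← hb₁, show (wa : W) * u * (u⁻¹ * (t : W) * u) = ((wa : W) * (t : W)) * u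
          by group, e0']
      have ne1 : (wa : W) * u ≠ (wa' : W) * u := by
        intro hEq
        have h4 : wa = wa' := Subtype.coe_injective (mul_right_cancel hEq)
        rw [h4] at hr; omega
      have ne2 : (D.cs.simple b : W) * ((wa : W) * u) ≠ (wa' : W) * u := by
        intro hEq
        have h4 : ((D.cs.simple b * wa : D.Waff) : W) * u = (wa' : W) * u := by
          rw [Subgroup.coe_mul, mul_assoc]; exact hEq
        have h5 : D.cs.simple b * wa = wa' := Subtype.coe_injective (mul_right_cancel h4)
        rw [h5, hlwa'] at hlen
        omega
      have hy : ((n'' : G) * (nt : G)) ∈ IwI D.I D.π ((wa : W) * u) := by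
        have hπ : D.π (n'' * nt) = (wa : W) * u := by rw [map_mul, hn'', hnt, e1]
        simpa using rep_mem D (n'' * nt) hπ
      obtain ⟨i, hi, j, hj, hyij⟩ := exists_sandwich D hmem hy
      have hg' : i * g ∈ IwI D.I D.π (D.cs.simple b : W) := mul_left_mem D hi hg
      have hh' : h * j ∈ IwI D.I D.π ((wa : W) * u) := mul_right_mem D hh hj
      have hnt' : ((nt : G))⁻¹ ∈ IwI D.I D.π (D.cs.simple b₁ : W) := by
        have hπ : D.π nt⁻¹ = (D.cs.simple b₁ : W) := by
          rw [map_inv, hnt, simple_coe_inv]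
        simpa using rep_mem D nt⁻¹ hπ
      have hz := T3R D b₁ ((wa : W) * u) hh' hnt'
      rw [e2] at hz
      have hkey : (i * g) * ((h * j) * (nt : G)⁻¹) = (n'' : G) := by
        have h6 : (n'' : G) = (i * (g * h) * j) * (nt : G)⁻¹ := by rw [← hyij]; group
        rw [h6]; group
      have hn''mem : (n'' : G) ∈ IwI D.I D.π ((wa' : W) * u) := rep_mem D n'' hn''
      rcases hz with hz1 | hz2
      · have h7 := T3L D b ((wa : W) * u) hg' hz1
        rw [hkey] at h7
        rcases h7 with hA | hA
        · exact ne1 (eq_of_mem_mem D hA hn''mem)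
        · exact ne2 (eq_of_mem_mem D hA hn''mem)
      · have h8 := IH (r - 1) (by omega) wa' u hu hlwa' hlen' (i * g)
          ((h * j) * (nt : G)⁻¹) hg' hz2
        rw [hkey] at h8
        exact h8 hn''mem

/-- If `ℓ(s·wa) = ℓ(wa) + 1` then `IsI · I(wa·u)I = I(s·wa·u)I`. -/
lemma prodA (b : B) (wa : D.Waff) (u : W) (hu : u ∈ D.Om)
    (hlen : D.cs.length (D.cs.simple b * wa) = D.cs.length wa + 1) :
    IwI D.I D.π (D.cs.simple b : W) * IwI D.I D.π ((wa : W) * u) =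
      IwI D.I D.π ((D.cs.simple b : W) * ((wa : W) * u)) := by
  apply Set.Subset.antisymm
  · rintro x hx
    obtain ⟨g, hg, h, hh, rfl⟩ := Set.mem_mul.mp hx
    rcases T3L D b ((wa : W) * u) hg hh with hA | hA
    · exact absurd hA (disjA D b (D.cs.length wa) wa u hu rfl hlen g h hg hh)
    · exact hA
  · intro x hx
    obtain ⟨na, hna⟩ := D.π_surjective (D.cs.simple b : W)
    obtain ⟨nw, hnw⟩ := D.π_surjective ((wa : W) * u)
    have h0 : ((na : G) * (nw : G)) ∈
        IwI D.I D.π ((D.cs.simple b : W) * ((wa : W) * u)) := by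
      have hπ : D.π (na * nw) = (D.cs.simple b : W) * ((wa : W) * u) := by
        rw [map_mul, hna, hnw]
      simpa using rep_mem D (na * nw) hπ
    obtain ⟨i, hi, j, hj, hx'⟩ := exists_sandwich D h0 hx
    rw [hx', show i * ((na : G) * (nw : G)) * j = (i * (na : G)) * ((nw : G) * j) by group]
    exact Set.mul_mem_mul (mul_left_mem D hi (rep_mem D na hna))
      (mul_right_mem D (rep_mem D nw hnw) hj)

lemma out_mem (v : W) (c : G ⧸ D.I) (hc : c ∈ leftCosetsIn D.I (IwI D.I D.π v)) :
    (Quotient.out c) ∈ IwI D.I D.π v := by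
  obtain ⟨a, ha, rfl⟩ := hc
  have h1 : a⁻¹ * (Quotient.out (QuotientGroup.mk a : G ⧸ D.I)) ∈ D.I :=
    QuotientGroup.eq.mp (QuotientGroup.out_eq' _).symm
  have h2 := mul_right_mem D ha h1
  rwa [mul_inv_cancel_left] at h2
lemma coe_one_eq : ((1 : D.Waff) : W) = 1 := rfl

/-- Multiplicativity of `q`: if `IsI·IvI = I(sv)I` and `sv ≠ v`, then `q(sv) = q(s)·q(v)`. -/
lemma qB (b : B) (v : W)
    (hprod : IwI D.I D.π (D.cs.simple b : W) * IwI D.I D.π v =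
      IwI D.I D.π ((D.cs.simple b : W) * v))
    (hne : (D.cs.simple b : W) * v ≠ v) :
    D.q ((D.cs.simple b : W) * v) = D.q (D.cs.simple b : W) * D.q v := by
  have hss : (D.cs.simple b : W) * (D.cs.simple b : W) = 1 := by
    rw [← Subgroup.coe_mul, D.cs.simple_mul_simple_self, coe_one_eq]
  have hbij : Set.BijOn
      (fun p : (G ⧸ D.I) × (G ⧸ D.I) =>
        (QuotientGroup.mk (Quotient.out p.1 * Quotient.out p.2) : G ⧸ D.I))
      ((leftCosetsIn D.I (IwI D.I D.π (D.cs.simple b : W))) ×ˢ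
        (leftCosetsIn D.I (IwI D.I D.π v)))
      (leftCosetsIn D.I (IwI D.I D.π ((D.cs.simple b : W) * v))) := by
    refine ⟨?_, ?_, ?_⟩
    · rintro ⟨c, d⟩ hp
      obtain ⟨hc, hd⟩ := Set.mem_prod.mp hp
      have h1 := out_mem D _ c hc
      have h2 := out_mem D _ d hd
      have h3 : Quotient.out c * Quotient.out d ∈
          IwI D.I D.π ((D.cs.simple b : W) * v) := by
        rw [← hprod]; exact Set.mul_mem_mul h1 h2
      exact Set.mem_image_of_mem _ h3
    · rintro ⟨c, d⟩ hp ⟨c', d'⟩ hp' hEq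
      obtain ⟨hc, hd⟩ := Set.mem_prod.mp hp
      obtain ⟨hc', hd'⟩ := Set.mem_prod.mp hp'
      simp only at hEq
      have hk : (Quotient.out c * Quotient.out d)⁻¹ *
          (Quotient.out c' * Quotient.out d') ∈ D.I := QuotientGroup.eq.mp hEq
      have ha := out_mem D _ c hc
      have ha' := out_mem D _ c' hc'
      have hbd := out_mem D _ d hd
      have hbd' := out_mem D _ d' hd'
      have hainv : (Quotient.out c)⁻¹ ∈ IwI D.I D.π (D.cs.simple b : W) := by
        have := inv_mem_IwI D ha
        rwa [simple_coe_inv] at this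
      have hz := T3L D b (D.cs.simple b : W) hainv ha'
      rw [hss] at hz
      have hcc' : c = c' := by
        rcases hz with hz1 | hz2
        · exfalso
          have hzd' : ((Quotient.out c)⁻¹ * Quotient.out c') * Quotient.out d' ∈
              IwI D.I D.π ((D.cs.simple b : W) * v) := by
            rw [← hprod]; exact Set.mul_mem_mul hz1 hbd'
          have hzd'2 : ((Quotient.out c)⁻¹ * Quotient.out c') * Quotient.out d' ∈
              IwI D.I D.π v := by
            have h5 : ((Quotient.out c)⁻¹ * Quotient.out c') * Quotient.out d' =
                Quotient.out d * ((Quotient.out c * Quotient.out d)⁻¹ *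
                  (Quotient.out c' * Quotient.out d')) := by group
            rw [h5]
            exact mul_right_mem D hbd hk
          exact hne (eq_of_mem_mem D hzd' hzd'2)
        · rw [IwI_one D] at hz2
          have := QuotientGroup.eq.mpr hz2
          rwa [QuotientGroup.out_eq', QuotientGroup.out_eq'] at this
      subst hcc'
      have hdd' : d = d' := by
        have h6 : (Quotient.out d)⁻¹ * Quotient.out d' ∈ D.I := by
          have h7 : (Quotient.out d)⁻¹ * Quotient.out d' =
              (Quotient.out c * Quotient.out d)⁻¹ *
                (Quotient.out c * Quotient.out d') := by group
          rw [h7]; exact hk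
        have := QuotientGroup.eq.mpr h6
        rwa [QuotientGroup.out_eq', QuotientGroup.out_eq'] at this
      rw [hdd']
    · rintro e ⟨gg, hgg, rfl⟩
      rw [← hprod] at hgg
      obtain ⟨a, ha, b2, hb2, rfl⟩ := Set.mem_mul.mp hgg
      have hcA : (QuotientGroup.mk a : G ⧸ D.I) ∈
          leftCosetsIn D.I (IwI D.I D.π (D.cs.simple b : W)) :=
        Set.mem_image_of_mem _ ha
      set i := a⁻¹ * Quotient.out (QuotientGroup.mk a : G ⧸ D.I) with hi
      have hiI : i ∈ D.I := QuotientGroup.eq.mp (QuotientGroup.out_eq' _).symm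
      have houtc : Quotient.out (QuotientGroup.mk a : G ⧸ D.I) = a * i := by
        rw [hi]; group
      have hb2' : i⁻¹ * b2 ∈ IwI D.I D.π v := mul_left_mem D (inv_mem hiI) hb2
      have hdB : (QuotientGroup.mk (i⁻¹ * b2) : G ⧸ D.I) ∈
          leftCosetsIn D.I (IwI D.I D.π v) := Set.mem_image_of_mem _ hb2'
      set j := (i⁻¹ * b2)⁻¹ * Quotient.out (QuotientGroup.mk (i⁻¹ * b2) : G ⧸ D.I) with hjd
      have hjI : j ∈ D.I := QuotientGroup.eq.mp (QuotientGroup.out_eq' _).symm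
      have houtd : Quotient.out (QuotientGroup.mk (i⁻¹ * b2) : G ⧸ D.I) =
          (i⁻¹ * b2) * j := by rw [hjd]; group
      refine ⟨(QuotientGroup.mk a, QuotientGroup.mk (i⁻¹ * b2)),
        Set.mem_prod.mpr ⟨hcA, hdB⟩, ?_⟩
      simp only
      rw [houtc, houtd, show a * i * (i⁻¹ * b2 * j) = (a * b2) * j by group]
      exact QuotientGroup.eq.mpr (by
        rw [show ((a * b2) * j)⁻¹ * (a * b2) = j⁻¹ by group]
        exact inv_mem hjI)
  rw [(D.TF _).2, (D.TF _).2, (D.TF _).2, ← hbij.image_eq,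
    Set.ncard_image_of_injOn hbij.injOn]
  rw [← Nat.card_coe_set_eq, ← Nat.card_coe_set_eq, ← Nat.card_coe_set_eq,
    Nat.card_congr (Equiv.Set.prod _ _), Nat.card_prod]

/-- Invariance of `q` under right translation by `Ω`. -/
lemma q_om (v : W) (n : D.N) (hn : D.π n ∈ D.Om) : D.q (v * D.π n) = D.q v := by
  have hbij : Set.BijOn
      (fun c : G ⧸ D.I => (QuotientGroup.mk (Quotient.out c * (n : G)) : G ⧸ D.I))
      (leftCosetsIn D.I (IwI D.I D.π v))
      (leftCosetsIn D.I (IwI D.I D.π (v * D.π n))) := by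
    refine ⟨?_, ?_, ?_⟩
    · intro c hc
      exact Set.mem_image_of_mem _ (mul_om_mem D n hn (out_mem D _ c hc))
    · intro c hc c' hc' hEq
      simp only at hEq
      have hk : (Quotient.out c * (n : G))⁻¹ * (Quotient.out c' * (n : G)) ∈ D.I :=
        QuotientGroup.eq.mp hEq
      have h6 : (Quotient.out c)⁻¹ * Quotient.out c' ∈ D.I := by
        have h7 := D.TOm n hn _ hk
        rwa [show (n : G) * ((Quotient.out c * (n : G))⁻¹ *
          (Quotient.out c' * (n : G))) * (n : G)⁻¹ =
          (Quotient.out c)⁻¹ * Quotient.out c' by group] at h7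
      have := QuotientGroup.eq.mpr h6
      rwa [QuotientGroup.out_eq', QuotientGroup.out_eq'] at this
    · rintro e ⟨gg, hgg, rfl⟩
      have hg' : gg * (n : G)⁻¹ ∈ IwI D.I D.π v := om_right_transfer D n hn hgg
      set i := (gg * (n : G)⁻¹)⁻¹ * Quotient.out (QuotientGroup.mk (gg * (n : G)⁻¹) : G ⧸ D.I)
        with hidef
      have hiI : i ∈ D.I := QuotientGroup.eq.mp (QuotientGroup.out_eq' _).symm
      have houtc : Quotient.out (QuotientGroup.mk (gg * (n : G)⁻¹) : G ⧸ D.I) =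
          (gg * (n : G)⁻¹) * i := by rw [hidef]; group
      refine ⟨QuotientGroup.mk (gg * (n : G)⁻¹), Set.mem_image_of_mem _ hg', ?_⟩
      simp only
      rw [houtc, show (gg * (n : G)⁻¹) * i * (n : G) = gg * ((n : G)⁻¹ * i * (n : G)) by group]
      refine QuotientGroup.eq.mpr ?_
      rw [show (gg * ((n : G)⁻¹ * i * (n : G)))⁻¹ * gg =
        ((n : G)⁻¹ * i * (n : G))⁻¹ by group]
      refine inv_mem ?_
      have := D.TOm n⁻¹ (by rw [map_inv]; exact inv_mem hn) i hiI
      simpa using this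
  rw [(D.TF _).2, (D.TF _).2, ← hbij.image_eq, Set.ncard_image_of_injOn hbij.injOn]

lemma q_one : D.q 1 = 1 := by
  rw [(D.TF _).2]
  have : leftCosetsIn D.I (IwI D.I D.π 1) = {(QuotientGroup.mk 1 : G ⧸ D.I)} := by
    ext e
    constructor
    · rintro ⟨a, ha, rfl⟩
      rw [IwI_one D] at ha
      have : (QuotientGroup.mk a : G ⧸ D.I) = QuotientGroup.mk 1 :=
        QuotientGroup.eq.mpr (by simpa using inv_mem ha)
      simpa using this
    · rintro rfl
      exact ⟨1, by rw [IwI_one D]; exact one_mem _, rfl⟩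
  rw [this, Set.ncard_singleton]

lemma q_om' (u : W) (hu : u ∈ D.Om) : D.q u = 1 := by
  obtain ⟨n, hn⟩ := D.π_surjective u
  have := q_om D 1 n (by rw [hn]; exact hu)
  rw [hn, one_mul, q_one D] at this
  exact this

lemma main_aux : ∀ l : List B, ∀ u : W, u ∈ D.Om →
    D.cs.length (D.cs.wordProd l) = l.length →
    D.q ((D.cs.wordProd l : W) * u) = (l.map fun b => D.q (D.cs.simple b : W)).prod := by
  intro l
  induction l with
  | nil =>
    intro u hu _
    rw [show ((D.cs.wordProd [] : D.Waff) : W) = 1 by rw [D.cs.wordProd_nil, coe_one_eq]]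
    rw [one_mul, List.map_nil, List.prod_nil]
    exact q_om' D u hu
  | cons b l' ih =>
    intro u hu hlen
    have hwp : D.cs.wordProd (b :: l') = D.cs.simple b * D.cs.wordProd l' :=
      D.cs.wordProd_cons b l'
    rw [hwp, List.length_cons] at hlen
    have hle := D.cs.length_wordProd_le l'
    have hub : D.cs.length (D.cs.simple b * D.cs.wordProd l') ≤
        D.cs.length (D.cs.wordProd l') + 1 := by
      have := D.cs.length_mul_le (D.cs.simple b) (D.cs.wordProd l')
      rwa [D.cs.length_simple, add_comm] at this
    have hl' : D.cs.length (D.cs.wordProd l') = l'.length := by omega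
    have hstep : D.cs.length (D.cs.simple b * D.cs.wordProd l') =
        D.cs.length (D.cs.wordProd l') + 1 := by omega
    have hprod := prodA D b (D.cs.wordProd l') u hu hstep
    have hne : (D.cs.simple b : W) * ((D.cs.wordProd l' : W) * u) ≠
        (D.cs.wordProd l' : W) * u := by
      intro hEq
      have h9 : (D.cs.simple b : W) * ((D.cs.wordProd l' : W) * u) =
          1 * ((D.cs.wordProd l' : W) * u) := by rw [one_mul]; exact hEq
      have hs1 : (D.cs.simple b : W) = 1 := mul_right_cancel h9
      have hs2 : D.cs.simple b = 1 := Subtype.ext (by rw [hs1]; rfl)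
      have := D.cs.length_simple b
      rw [hs2] at this
      simp at this
    have hq := qB D b ((D.cs.wordProd l' : W) * u) hprod hne
    rw [show ((D.cs.wordProd (b :: l') : D.Waff) : W) * u =
        (D.cs.simple b : W) * ((D.cs.wordProd l' : W) * u) by
      rw [hwp, Subgroup.coe_mul, mul_assoc]]
    rw [hq, ih u hu hl', List.map_cons, List.prod_cons]

end IwahoriAux
/-- If `w ∈ W̃` is written as `w = s₁·s₂⋯s_r·u` with the `s_i` simple reflections, `u ∈ Ω`
and `r = ℓ(w)` (a reduced decomposition), then `q_w = q_{s₁}·q_{s₂}⋯q_{s_r}`. -/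
theorem q_eq_prod_of_reduced {G W B : Type} [Group G] [Group W]
    {M : CoxeterMatrix B} (D : IwahoriHeckeSetup G W B M)
    (w : W) (l : List B) (u : W) (hu : u ∈ D.Om)
    (hw : w = (D.cs.wordProd l : W) * u) (hred : l.length = D.len w) :
    D.q w = (l.map fun b => D.q (D.cs.simple b : W)).prod := by
  have hspec := D.len_spec (D.cs.wordProd l) ⟨u, hu⟩
  have hlen : D.cs.length (D.cs.wordProd l) = l.length := by
    rw [hw] at hred
    rw [show ((⟨u, hu⟩ : D.Om) : W) = u from rfl] at hspec
    omega
  rw [hw]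
  exact IwahoriAux.main_aux D l u hu hlen
end
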